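/- Let σ² > 0, X ∈ ℝ^{N×Q}, K = X Xᵀ + σ² I_N, and Y ∈ ℝ^{N×M}. The gradient of L(X) = M·(−(N/2)log 2π − (1/2)log det(K)) − (1/2) tr(K⁻¹ Y Yᵀ) with respect to X equals K⁻¹ Y Yᵀ K⁻¹ X − M K⁻¹ X. -/

import Mathlib

open Matrix Polynomial DualNumber TrivSqZeroExt

lemma fst_aeval_eps (p : ℝ[X]) : TrivSqZeroExt.fst (aeval (ε : ℝ[ε]) p) = p.eval 0 := by
  have := Polynomial.aeval_algHom_apply (TrivSqZeroExt.fstHom ℝ ℝ ℝ) (ε : ℝ[ε]) p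
  simp only [fstHom_apply, fst_eps] at this
  rw [← this, aeval_def, eval₂_at_zero]
  simp [Polynomial.coeff_zero_eq_eval_zero]

lemma snd_aeval_eps (p : ℝ[X]) :
    TrivSqZeroExt.snd (aeval (ε : ℝ[ε]) p) = p.derivative.eval 0 := by
  induction p using Polynomial.induction_on' with
  | add p q hp hq => simp [hp, hq]
  | monomial n a =>
    rw [aeval_monomial]
    match n with
    | 0 => simp [TrivSqZeroExt.algebraMap_eq_inl']
    | 1 => simp [TrivSqZeroExt.algebraMap_eq_inl']
    | (m+2) =>
      have : (ε : ℝ[ε]) ^ (m + 2) = 0 := by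
        rw [pow_add, pow_two, eps_mul_eps, mul_zero]
      simp [this]

set_option maxHeartbeats 1600000 in
theorem dppca_loglik_gradient {N M Q : ℕ} (σ2 : ℝ) (hσ : 0 < σ2)
    (X H : Matrix (Fin N) (Fin Q) ℝ) (Y : Matrix (Fin N) (Fin M) ℝ) :
    HasDerivAt
      (fun t : ℝ =>
        (M : ℝ) * (-(N / 2 : ℝ) * Real.log (2 * Real.pi) -
            (1 / 2) * Real.log ((X + t • H) * (X + t • H)ᵀ +
              σ2 • (1 : Matrix (Fin N) (Fin N) ℝ)).det) -
          (1 / 2) * (((X + t • H) * (X + t • H)ᵀ +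
              σ2 • (1 : Matrix (Fin N) (Fin N) ℝ))⁻¹ * (Y * Yᵀ)).trace)
      ((((X * Xᵀ + σ2 • (1 : Matrix (Fin N) (Fin N) ℝ))⁻¹ * (Y * Yᵀ) *
            (X * Xᵀ + σ2 • (1 : Matrix (Fin N) (Fin N) ℝ))⁻¹ * X -
          (M : ℝ) • ((X * Xᵀ + σ2 • (1 : Matrix (Fin N) (Fin N) ℝ))⁻¹ * X))ᵀ * H).trace)
      0 := by
  classical
  set K : Matrix (Fin N) (Fin N) ℝ := X * Xᵀ + σ2 • 1 with hKdef
  set B : Matrix (Fin N) (Fin N) ℝ := X * Hᵀ + H * Xᵀ with hBdef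
  set C2 : Matrix (Fin N) (Fin N) ℝ := H * Hᵀ with hC2def
  set A : Matrix (Fin N) (Fin N) ℝ := Y * Yᵀ with hAdef
  -- positive definiteness of K
  have hXX : (X * Xᵀ).PosSemidef := by
    have := Matrix.posSemidef_self_mul_conjTranspose X
    simpa [Matrix.conjTranspose_eq_transpose_of_trivial] using this
  have hKpd : K.PosDef := by
    refine Matrix.PosDef.posSemidef_add hXX ?_
    rw [Matrix.smul_one_eq_diagonal]
    exact Matrix.posDef_diagonal_iff.mpr fun _ => hσ
  have hd : (0:ℝ) < K.det := hKpd.det_pos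
  have hdu : IsUnit K.det := hd.ne'.isUnit
  have hKK : K * K⁻¹ = 1 := Matrix.mul_nonsing_inv _ hdu
  have hKK' : K⁻¹ * K = 1 := Matrix.nonsing_inv_mul _ hdu
  have hKs : Kᵀ = K := by
    rw [hKdef]
    simp [Matrix.transpose_add, Matrix.transpose_mul, Matrix.transpose_smul]
  have hKis : (K⁻¹)ᵀ = K⁻¹ := by rw [Matrix.transpose_nonsing_inv, hKs]
  have hAs : Aᵀ = A := by rw [hAdef]; simp [Matrix.transpose_mul]
  -- the polynomial matrix
  set P : Matrix (Fin N) (Fin N) ℝ[X] :=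
    K.map C + (Polynomial.X : ℝ[X]) • B.map C + (Polynomial.X ^ 2 : ℝ[X]) • C2.map C with hPdef
  have hPt : ∀ t : ℝ, (evalRingHom t).mapMatrix P = K + t • B + t ^ 2 • C2 := by
    intro t
    ext i j
    simp only [hPdef, RingHom.mapMatrix_apply, Matrix.map_apply, Matrix.add_apply,
      Matrix.smul_apply, smul_eq_mul, eval_add, eval_mul, eval_C, eval_X, eval_pow,
      coe_evalRingHom]
  have hKt : ∀ t : ℝ, (X + t • H) * (X + t • H)ᵀ + σ2 • (1 : Matrix (Fin N) (Fin N) ℝ)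
      = K + t • B + t ^ 2 • C2 := by
    intro t
    rw [hKdef, hBdef, hC2def]
    simp only [Matrix.transpose_add, Matrix.transpose_smul, Matrix.mul_add, Matrix.add_mul,
      Matrix.smul_mul, Matrix.mul_smul, smul_smul, smul_add, pow_two]
    module
  -- scalar polynomials
  set vp : ℝ[X] := P.det with hvp
  set up : ℝ[X] := (P.adjugate * A.map C).trace with hup
  have hvpt : ∀ t : ℝ, ((X + t • H) * (X + t • H)ᵀ
      + σ2 • (1 : Matrix (Fin N) (Fin N) ℝ)).det = vp.eval t := by
    intro t
    rw [hKt t, hvp, ← coe_evalRingHom, RingHom.map_det, hPt t]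
  have htr : ∀ (t : ℝ) (Mt : Matrix (Fin N) (Fin N) ℝ[X]),
      ((evalRingHom t).mapMatrix Mt).trace = (Mt.trace).eval t := by
    intro t Mt
    simp [Matrix.trace, Matrix.diag, RingHom.mapMatrix_apply, Matrix.map_apply, eval_finset_sum]
  have hupt : ∀ t : ℝ, ((K + t • B + t ^ 2 • C2).adjugate * A).trace = up.eval t := by
    intro t
    have hAC : (evalRingHom t).mapMatrix (A.map C) = A := by
      ext i j
      simp [RingHom.mapMatrix_apply, Matrix.map_apply]
    rw [hup, ← htr t, _root_.map_mul, RingHom.map_adjugate, hPt t, hAC]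
  -- trace of K(t)⁻¹ * A as quotient
  have htrace : ∀ t : ℝ, (((X + t • H) * (X + t • H)ᵀ
      + σ2 • (1 : Matrix (Fin N) (Fin N) ℝ))⁻¹ * A).trace = up.eval t / vp.eval t := by
    intro t
    rw [Matrix.inv_def, Ring.inverse_eq_inv, Matrix.smul_mul, Matrix.trace_smul, hKt t,
      hupt t, ← hKt t, hvpt t, smul_eq_mul, div_eq_inv_mul]
  -- dual number computations
  have heps2 : (ε : ℝ[ε]) ^ 2 = 0 := by rw [pow_two, eps_mul_eps]
  set Φ : Matrix (Fin N) (Fin N) ℝ →+* Matrix (Fin N) (Fin N) ℝ[ε] :=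
    (algebraMap ℝ ℝ[ε]).mapMatrix with hΦ
  have htrΦ : ∀ Mt : Matrix (Fin N) (Fin N) ℝ, (Φ Mt).trace = algebraMap ℝ ℝ[ε] Mt.trace := by
    intro Mt
    simp [hΦ, Matrix.trace, Matrix.diag, RingHom.mapMatrix_apply, Matrix.map_apply, map_sum]
  have htrE : ∀ Mt : Matrix (Fin N) (Fin N) ℝ[X],
      ((aeval (ε : ℝ[ε])).mapMatrix Mt).trace = aeval (ε : ℝ[ε]) Mt.trace := by
    intro Mt
    simp [Matrix.trace, Matrix.diag, AlgHom.mapMatrix_apply, Matrix.map_apply, map_sum]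
  have hPε : (Polynomial.aeval (ε : ℝ[ε])).mapMatrix P = Φ K + (ε : ℝ[ε]) • Φ B := by
    ext i j
    · simp only [hPdef, hΦ, AlgHom.mapMatrix_apply, RingHom.mapMatrix_apply, Matrix.map_apply,
        Matrix.add_apply, Matrix.smul_apply, smul_eq_mul, _root_.map_add, _root_.map_mul, map_pow,
        aeval_X, aeval_C, heps2, zero_mul, mul_zero, add_zero]
    · simp only [hPdef, hΦ, AlgHom.mapMatrix_apply, RingHom.mapMatrix_apply, Matrix.map_apply,
        Matrix.add_apply, Matrix.smul_apply, smul_eq_mul, _root_.map_add, _root_.map_mul, map_pow,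
        aeval_X, aeval_C, heps2, zero_mul, mul_zero, add_zero]
  set d : ℝ := K.det with hddef
  set s : ℝ := (K⁻¹ * B).trace with hsdef
  set a : ℝ := (K⁻¹ * A).trace with hadef
  set b : ℝ := (K⁻¹ * B * K⁻¹ * A).trace with hbdef
  -- determinant over dual numbers
  have hfact : Φ K + (ε : ℝ[ε]) • Φ B = Φ K * (1 + (ε : ℝ[ε]) • Φ (K⁻¹ * B)) := by
    rw [Matrix.mul_add, Matrix.mul_one, Matrix.mul_smul, ← _root_.map_mul,
      ← Matrix.mul_assoc, hKK, Matrix.one_mul]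
  have hdetε : ((Polynomial.aeval (ε : ℝ[ε])).mapMatrix P).det
      = algebraMap ℝ ℝ[ε] d * (1 + algebraMap ℝ ℝ[ε] s * ε) := by
    rw [hPε, hfact, Matrix.det_mul, ← RingHom.map_det, Matrix.det_one_add_smul, heps2,
      mul_zero, add_zero, htrΦ]
  have hvpε : aeval (ε : ℝ[ε]) vp = algebraMap ℝ ℝ[ε] d * (1 + algebraMap ℝ ℝ[ε] s * ε) := by
    rw [hvp, AlgHom.map_det, hdetε]
  have hv0 : vp.eval 0 = d := by
    rw [← fst_aeval_eps, hvpε]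
    simp [TrivSqZeroExt.algebraMap_eq_inl']
  have hv1 : vp.derivative.eval 0 = d * s := by
    rw [← snd_aeval_eps, hvpε]
    simp [TrivSqZeroExt.algebraMap_eq_inl']
  -- explicit inverse over dual numbers
  set W : Matrix (Fin N) (Fin N) ℝ[ε] := Φ K⁻¹ - (ε : ℝ[ε]) • Φ (K⁻¹ * B * K⁻¹) with hWdef
  have hW : (Φ K + (ε : ℝ[ε]) • Φ B) * W = 1 := by
    rw [hWdef, Matrix.mul_sub, Matrix.add_mul, Matrix.add_mul, Matrix.mul_smul,
      Matrix.smul_mul, Matrix.mul_smul, Matrix.smul_mul, smul_smul, eps_mul_eps, zero_smul,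
      ← _root_.map_mul, ← _root_.map_mul, ← _root_.map_mul, hKK, _root_.map_one]
    have e1 : K * (K⁻¹ * B * K⁻¹) = B * K⁻¹ := by
      rw [Matrix.mul_assoc K⁻¹ B K⁻¹, ← Matrix.mul_assoc, hKK, Matrix.one_mul]
    have e2 : B * K⁻¹ = B * K⁻¹ := rfl
    rw [e1]
    abel
  have hWK : W * ((Polynomial.aeval (ε : ℝ[ε])).mapMatrix P) = 1 := by
    rw [hPε]
    exact mul_eq_one_comm.mp hW
  have hadjε : ((Polynomial.aeval (ε : ℝ[ε])).mapMatrix P).adjugate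
      = ((Polynomial.aeval (ε : ℝ[ε])).mapMatrix P).det • W := by
    calc ((Polynomial.aeval (ε : ℝ[ε])).mapMatrix P).adjugate
        = (W * ((Polynomial.aeval (ε : ℝ[ε])).mapMatrix P))
            * ((Polynomial.aeval (ε : ℝ[ε])).mapMatrix P).adjugate := by
          rw [hWK, Matrix.one_mul]
      _ = W * (((Polynomial.aeval (ε : ℝ[ε])).mapMatrix P).det
            • (1 : Matrix (Fin N) (Fin N) ℝ[ε])) := by
          rw [Matrix.mul_assoc, Matrix.mul_adjugate]
      _ = ((Polynomial.aeval (ε : ℝ[ε])).mapMatrix P).det • W := by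
          rw [Matrix.mul_smul, Matrix.mul_one]
  -- trace of adjugate * A over dual numbers
  have hupε : aeval (ε : ℝ[ε]) up
      = (algebraMap ℝ ℝ[ε] d * (1 + algebraMap ℝ ℝ[ε] s * ε))
        * (algebraMap ℝ ℝ[ε] a - ε * algebraMap ℝ ℝ[ε] b) := by
    have hAC : (Polynomial.aeval (ε : ℝ[ε])).mapMatrix (A.map C) = Φ A := by
      ext i j <;>
        simp [hΦ, AlgHom.mapMatrix_apply, RingHom.mapMatrix_apply, Matrix.map_apply, aeval_C]
    have hWA : W * Φ A = Φ (K⁻¹ * A) - (ε : ℝ[ε]) • Φ (K⁻¹ * B * K⁻¹ * A) := by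
      rw [hWdef, Matrix.sub_mul, Matrix.smul_mul, ← _root_.map_mul, ← _root_.map_mul]
    rw [hup, ← htrE, _root_.map_mul, AlgHom.map_adjugate, hAC, hadjε,
      Matrix.smul_mul, Matrix.trace_smul, hWA, Matrix.trace_sub, htrΦ, Matrix.trace_smul,
      htrΦ, hdetε, smul_eq_mul, smul_eq_mul]
  have hu0 : up.eval 0 = d * a := by
    rw [← fst_aeval_eps, hupε]
    simp [TrivSqZeroExt.algebraMap_eq_inl']
  have hu1 : up.derivative.eval 0 = d * s * a - d * b := by
    rw [← snd_aeval_eps, hupε]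
    simp [TrivSqZeroExt.algebraMap_eq_inl']
    ring
  -- derivatives of the scalar functions
  have hdne : vp.eval 0 ≠ 0 := by rw [hv0]; exact hd.ne'
  have hvD : HasDerivAt (fun t : ℝ => vp.eval t) (d * s) 0 := by
    have h := Polynomial.hasDerivAt vp 0
    rwa [hv1] at h
  have huD : HasDerivAt (fun t : ℝ => up.eval t) (d * s * a - d * b) 0 := by
    have h := Polynomial.hasDerivAt up 0
    rwa [hu1] at h
  have hlog : HasDerivAt (fun t : ℝ => Real.log (vp.eval t)) s 0 := by
    have h := hvD.log hdne
    rw [hv0] at h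
    convert h using 1
    field_simp
  have hquot : HasDerivAt (fun t : ℝ => up.eval t / vp.eval t) (-b) 0 := by
    have h := huD.div hvD hdne
    rw [hv0, hu0] at h
    convert h using 1
    have hd0 : d ≠ 0 := hd.ne'
    · rfl
    · rfl
    · rfl
    field_simp
    ring
  set c : ℝ := -(N / 2 : ℝ) * Real.log (2 * Real.pi) with hcdef
  have hmain : HasDerivAt (fun t : ℝ =>
      (M : ℝ) * (c - (1 / 2 : ℝ) * Real.log (vp.eval t))
        - (1 / 2 : ℝ) * (up.eval t / vp.eval t))
      ((M : ℝ) * (0 - (1 / 2 : ℝ) * s) - (1 / 2 : ℝ) * (-b)) 0 :=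
    (((hasDerivAt_const (0 : ℝ) c).sub (hlog.const_mul (1 / 2 : ℝ))).const_mul (M : ℝ)).sub
      (hquot.const_mul (1 / 2 : ℝ))
  -- trace identities
  have key : ∀ G : Matrix (Fin N) (Fin N) ℝ, Gᵀ = G →
      (G * B).trace = 2 * ((G * X)ᵀ * H).trace := by
    intro G hG
    have e1 : (G * (X * Hᵀ)).trace = ((G * X)ᵀ * H).trace := by
      have h := Matrix.trace_transpose ((G * X) * Hᵀ)
      rw [Matrix.transpose_mul, Matrix.transpose_transpose] at h
      rw [← Matrix.mul_assoc, ← h, Matrix.trace_mul_comm]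
    have e2 : (G * (H * Xᵀ)).trace = ((G * X)ᵀ * H).trace := by
      rw [Matrix.transpose_mul, hG, ← Matrix.mul_assoc, Matrix.trace_mul_comm,
        Matrix.mul_assoc, ← Matrix.mul_assoc]
    rw [hBdef, Matrix.mul_add, Matrix.trace_add, e1, e2]
    ring
  have hs2 : s = 2 * ((K⁻¹ * X)ᵀ * H).trace := key K⁻¹ hKis
  have hGsym : (K⁻¹ * A * K⁻¹)ᵀ = K⁻¹ * A * K⁻¹ := by
    rw [Matrix.transpose_mul, Matrix.transpose_mul, hKis, hAs, ← Matrix.mul_assoc K⁻¹ A K⁻¹]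
  have hb2 : b = 2 * ((K⁻¹ * A * K⁻¹ * X)ᵀ * H).trace := by
    have h : (K⁻¹ * B * K⁻¹ * A).trace = ((K⁻¹ * A * K⁻¹) * B).trace := by
      rw [Matrix.mul_assoc (K⁻¹ * B), Matrix.trace_mul_comm, ← Matrix.mul_assoc]
    rw [hbdef, h]
    exact key (K⁻¹ * A * K⁻¹) hGsym
  -- final value identity
  have hval : ((K⁻¹ * A * K⁻¹ * X - (M : ℝ) • (K⁻¹ * X))ᵀ * H).trace
      = (M : ℝ) * (0 - (1 / 2 : ℝ) * s) - (1 / 2 : ℝ) * (-b) := by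
    rw [Matrix.transpose_sub, Matrix.sub_mul, Matrix.trace_sub, Matrix.transpose_smul,
      Matrix.smul_mul, Matrix.trace_smul, smul_eq_mul, hs2, hb2]
    ring
  rw [hval]
  exact hmain.congr_of_eventuallyEq (Filter.Eventually.of_forall fun t => by
    simp only []
    rw [hvpt t, htrace t])
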